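/- In a local Moufang set, the Hua subgroup H = <μ_x μ_y : x, y units> equals the two-point stabilizer G_{0,∞} of 0 and ∞ in the little projective group; moreover the point stabilizer G_0 equals U_0 H, and G = U_0 H U_∞ ∪ U_0 H τ U_0°. -/

import Mathlib

open Equiv

structure LocalMoufangSet (X : Type*) where
  r : X → X → Prop
  requiv : Equivalence r
  U : X → Subgroup (Equiv.Perm X)
  preserves : ∀ x : X, ∀ u ∈ U x, ∀ a b : X, r a b ↔ r (u a) (u b)
  big : ∃ a b c : X, ¬ r a b ∧ ¬ r b c ∧ ¬ r a c
  lm1 : ∀ x y : X, r x y → ∀ u ∈ U x, ∃ v ∈ U y, ∀ z : X, r (u z) (v z)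
  lm2_fix : ∀ x : X, ∀ u ∈ U x, u x = x
  lm2_trans : ∀ x y z : X, ¬ r y x → ¬ r z x → ∃! u : Equiv.Perm X, u ∈ U x ∧ u y = z
  lm2'_trans : ∀ x y z : X, ¬ r y x → ¬ r z x → ∃ u ∈ U x, r (u y) z
  lm2'_free : ∀ x : X, ∀ u ∈ U x, ∀ y : X, ¬ r y x → r (u y) y → ∀ z : X, r (u z) z
  lm3 : ∀ x : X, ∀ g ∈ (⨆ y : X, U y : Subgroup (Equiv.Perm X)),
      (U x).map (MulAut.conj g).toMonoidHom = U (g x)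

namespace LocalMoufangSet

variable {X : Type*} (M : LocalMoufangSet X)

/-- The little projective group. -/
def G : Subgroup (Equiv.Perm X) := ⨆ x : X, M.U x

/-- `x` is a unit with respect to the base points `o` (zero) and `ι` (infinity). -/
def IsUnitPt (o ι x : X) : Prop := ¬ M.r x o ∧ ¬ M.r x ι

/-- `μ` is the μ-map of `x`: it lies in the double coset `U_0 α_x U_0` and swaps `o` and `ι`.
(We use the left-action convention: a right product `g α h` corresponds to `h * α * g`.) -/
def IsMuMap (o ι x : X) (μ : Equiv.Perm X) : Prop :=
  μ o = ι ∧ μ ι = o ∧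
    ∃ a ∈ M.U ι, a o = x ∧ ∃ g ∈ M.U o, ∃ h ∈ M.U o, μ = h * a * g

/-- Specialness with respect to a μ-map `τ`: `(-x)τ = -(xτ)` for all units `x`. -/
def Special (o ι : X) (τ : Equiv.Perm X) : Prop :=
  ∀ z : X, IsUnitPt M o ι z → ∀ a ∈ M.U ι, a o = z → ∀ b ∈ M.U ι, b o = τ z →
    τ (a⁻¹ o) = b⁻¹ o

end LocalMoufangSet

theorem Equiv.Perm.apply_inv_self {α : Type*} (f : Equiv.Perm α) (x : α) : f (f⁻¹ x) = x :=
  f.apply_symm_apply x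

theorem Equiv.Perm.inv_apply_self {α : Type*} (f : Equiv.Perm α) (x : α) : f⁻¹ (f x) = x :=
  f.symm_apply_apply x


namespace LMS10

open Equiv LocalMoufangSet

variable {X : Type*} {M : LocalMoufangSet X} {o ι : X}

lemma rsymm {a b : X} (h : M.r a b) : M.r b a := M.requiv.symm h

lemma rtrans {a b c : X} (h : M.r a b) (h' : M.r b c) : M.r a c := M.requiv.trans h h'

lemma memG {x : X} {u : Perm X} (hu : u ∈ M.U x) : u ∈ M.G :=
  (le_iSup (fun y => M.U y) x) hu

lemma G_pres {g : Perm X} (hg : g ∈ M.G) : ∀ a b : X, M.r a b ↔ M.r (g a) (g b) := by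
  let K : Subgroup (Perm X) :=
  { carrier := {g : Perm X | ∀ a b : X, M.r a b ↔ M.r (g a) (g b)}
    one_mem' := by intro a b; simp
    mul_mem' := by
      intro f g hf hg a b
      simpa [Perm.mul_apply] using (hg a b).trans (hf (g a) (g b))
    inv_mem' := by
      intro f hf a b
      have := hf (f⁻¹ a) (f⁻¹ b)
      simpa using this.symm }
  have hK : M.G ≤ K := iSup_le fun x u hu => M.preserves x u hu
  exact hK hg

lemma conj_mem {g u : Perm X} {x : X} (hg : g ∈ M.G) (hu : u ∈ M.U x) :
    g * u * g⁻¹ ∈ M.U (g x) := by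
  have h3 := M.lm3 x g hg
  rw [← h3]
  exact ⟨u, hu, by simp⟩



/-- kernel criterion for `U o` -/
lemma ker_of_U0 (h0 : ¬ M.r o ι) {a : Perm X} (ha : a ∈ M.U o) (h : M.r (a ι) ι) :
    ∀ z, M.r (a z) z :=
  M.lm2'_free o a ha ι (fun h' => h0 (rsymm h')) h

lemma ker_of_Ui (h0 : ¬ M.r o ι) {b : Perm X} (hb : b ∈ M.U ι) (h : M.r (b o) o) :
    ∀ z, M.r (b z) z :=
  M.lm2'_free ι b hb o h0 h

lemma ker_inv {k : Perm X} (hk : ∀ z, M.r (k z) z) : ∀ z, M.r (k⁻¹ z) z := by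
  intro z
  have := hk (k⁻¹ z)
  rw [Perm.apply_inv_self] at this
  exact rsymm this

lemma ker_mul {k l : Perm X} (hk : ∀ z, M.r (k z) z) (hl : ∀ z, M.r (l z) z) :
    ∀ z, M.r ((k * l) z) z := by
  intro z
  rw [Perm.mul_apply]
  exact rtrans (hk (l z)) (hl z)

lemma ker_conj {g k : Perm X} (hg : g ∈ M.G) (hk : ∀ z, M.r (k z) z) :
    ∀ z, M.r ((g * k * g⁻¹) z) z := by
  intro z
  have h1 : M.r (k (g⁻¹ z)) (g⁻¹ z) := hk _
  have h2 := (G_pres hg _ _).mp h1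
  simpa [Perm.mul_apply] using h2

/-- existence from lm2 -/
lemma exU0 (h0 : ¬ M.r o ι) {z : X} (hz : ¬ M.r z o) : ∃ u ∈ M.U o, u ι = z := by
  have := (M.lm2_trans o ι z (fun h' => h0 (rsymm h')) hz).exists
  obtain ⟨u, hu, he⟩ := this
  exact ⟨u, hu, he⟩

lemma exUi (h0 : ¬ M.r o ι) {z : X} (hz : ¬ M.r z ι) : ∃ v ∈ M.U ι, v o = z := by
  obtain ⟨v, hv, he⟩ := (M.lm2_trans ι o z h0 hz).exists
  exact ⟨v, hv, he⟩

lemma eq_one_U0 (h0 : ¬ M.r o ι) {a : Perm X} (ha : a ∈ M.U o) (h : a ι = ι) : a = 1 := by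
  obtain ⟨u, -, hu⟩ := M.lm2_trans o ι ι (fun h' => h0 (rsymm h')) (fun h' => h0 (rsymm h'))
  have h1 := hu a ⟨ha, h⟩
  have h2 := hu 1 ⟨(M.U o).one_mem, by simp⟩
  rw [h1, h2]

lemma eq_one_Ui (h0 : ¬ M.r o ι) {b : Perm X} (hb : b ∈ M.U ι) (h : b o = o) : b = 1 := by
  obtain ⟨u, -, hu⟩ := M.lm2_trans ι o o h0 h0
  have h1 := hu b ⟨hb, h⟩
  have h2 := hu 1 ⟨(M.U ι).one_mem, by simp⟩
  rw [h1, h2]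

/-- `σ` is a μ-map of some unit. -/
def IsMu (M : LocalMoufangSet X) (o ι : X) (σ : Perm X) : Prop :=
  ∃ y, M.IsUnitPt o ι y ∧ M.IsMuMap o ι y σ

lemma mu_mem_G {σ : Perm X} (hσ : IsMu M o ι σ) : σ ∈ M.G := by
  obtain ⟨y, -, -, -, a, ha, -, g, hg, h, hh, rfl⟩ := hσ
  exact mul_mem (mul_mem (memG hh) (memG ha)) (memG hg)

lemma mu_o {σ : Perm X} (hσ : IsMu M o ι σ) : σ o = ι := hσ.choose_spec.2.1

lemma mu_i {σ : Perm X} (hσ : IsMu M o ι σ) : σ ι = o := hσ.choose_spec.2.2.1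

lemma mu_inv (h0 : ¬ M.r o ι) {σ : Perm X} (hσ : IsMu M o ι σ) : IsMu M o ι σ⁻¹ := by
  obtain ⟨y, hy, hoι, hιo, a, ha, hao, g, hg, h, hh, heq⟩ := hσ
  refine ⟨a⁻¹ o, ⟨?_, ?_⟩, ?_, ?_, a⁻¹, (M.U ι).inv_mem ha, rfl, h⁻¹, (M.U o).inv_mem hh,
    g⁻¹, (M.U o).inv_mem hg, by rw [heq]; group⟩
  · intro hr
    have := (M.preserves ι a ha (a⁻¹ o) o).mp hr
    rw [Perm.apply_inv_self, hao] at this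
    exact hy.1 (rsymm this)
  · intro hr
    have := (M.preserves ι a ha (a⁻¹ o) ι).mp hr
    rw [Perm.apply_inv_self, M.lm2_fix ι a ha] at this
    exact h0 this
  · rw [← hιo, Perm.inv_apply_self]
  · rw [← hoι, Perm.inv_apply_self]

variable {τ : Perm X} {H : Subgroup (Perm X)}

lemma mumul_mem_H
    (hH : H = Subgroup.closure {g : Perm X |
      ∃ x y : X, ∃ μx μy : Perm X, M.IsUnitPt o ι x ∧ M.IsUnitPt o ι y ∧
        M.IsMuMap o ι x μx ∧ M.IsMuMap o ι y μy ∧ g = μy * μx})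
    {σ1 σ2 : Perm X} (h1 : IsMu M o ι σ1) (h2 : IsMu M o ι σ2) : σ1 * σ2 ∈ H := by
  obtain ⟨y1, hy1, hm1⟩ := h1
  obtain ⟨y2, hy2, hm2⟩ := h2
  rw [hH]
  exact Subgroup.subset_closure ⟨y2, y1, σ2, σ1, hy2, hy1, hm2, hm1, rfl⟩

lemma H_mem_spec
    (hH : H = Subgroup.closure {g : Perm X |
      ∃ x y : X, ∃ μx μy : Perm X, M.IsUnitPt o ι x ∧ M.IsUnitPt o ι y ∧
        M.IsMuMap o ι x μx ∧ M.IsMuMap o ι y μy ∧ g = μy * μx})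
    {g : Perm X} (hg : g ∈ H) : g ∈ M.G ∧ g o = o ∧ g ι = ι := by
  rw [hH] at hg
  refine Subgroup.closure_induction ?_ ?_ ?_ ?_ hg
  · rintro g ⟨x1, y1, μx, μy, hux, huy, hmx, hmy, rfl⟩
    refine ⟨mul_mem (mu_mem_G ⟨y1, huy, hmy⟩) (mu_mem_G ⟨x1, hux, hmx⟩), ?_, ?_⟩
    · rw [Perm.mul_apply, hmx.1, hmy.2.1]
    · rw [Perm.mul_apply, hmx.2.1, hmy.1]
  · exact ⟨one_mem _, by simp, by simp⟩
  · rintro a b - - ⟨haG, hao, haι⟩ ⟨hbG, hbo, hbι⟩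
    exact ⟨mul_mem haG hbG, by rw [Perm.mul_apply, hbo, hao], by rw [Perm.mul_apply, hbι, haι]⟩
  · rintro a - ⟨haG, hao, haι⟩
    refine ⟨inv_mem haG, ?_, ?_⟩
    · rw [← hao, Perm.inv_apply_self]; exact hao.symm
    · rw [← haι, Perm.inv_apply_self]; exact haι.symm

lemma H_conj_U0
    (hH : H = Subgroup.closure {g : Perm X |
      ∃ x y : X, ∃ μx μy : Perm X, M.IsUnitPt o ι x ∧ M.IsUnitPt o ι y ∧
        M.IsMuMap o ι x μx ∧ M.IsMuMap o ι y μy ∧ g = μy * μx})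
    {h a : Perm X} (hh : h ∈ H) (ha : a ∈ M.U o) : h⁻¹ * a * h ∈ M.U o := by
  obtain ⟨hG, hho, -⟩ := H_mem_spec hH hh
  have hinv : h⁻¹ o = o := by rw [← hho, Perm.inv_apply_self]; exact hho.symm
  have := conj_mem (M := M) (inv_mem hG) ha
  rwa [inv_inv, hinv] at this

lemma decomp_nonker (h0 : ¬ M.r o ι) {v : Perm X} (hv : v ∈ M.U ι) (hvo : ¬ M.r (v o) o) :
    ∃ μ, IsMu M o ι μ ∧ ∃ h1 ∈ M.U o, ∃ g1 ∈ M.U o,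
      v = h1⁻¹ * μ * g1⁻¹ ∧ ¬ M.r (h1 ι) ι ∧ ¬ M.r (g1 ι) ι := by
  have hvι : v ι = ι := M.lm2_fix ι v hv
  have hxι : ¬ M.r (v o) ι := by
    intro hr
    exact h0 ((M.preserves ι v hv o ι).mpr (by rwa [hvι]))
  obtain ⟨h1, ⟨hh1, hh1x⟩, -⟩ := M.lm2_trans o (v o) ι hvo (fun h' => h0 (rsymm h'))
  have hvinv : ¬ M.r (v⁻¹ o) o := by
    intro hr
    have := (M.preserves ι v hv _ _).mp hr
    rw [Perm.apply_inv_self] at this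
    exact hvo (rsymm this)
  obtain ⟨g1, hg1, hg1ι⟩ := exU0 h0 hvinv
  have μo : (h1 * v * g1) o = ι := by
    rw [Perm.mul_apply, Perm.mul_apply, M.lm2_fix o g1 hg1, hh1x]
  have μι : (h1 * v * g1) ι = o := by
    rw [Perm.mul_apply, Perm.mul_apply, hg1ι, Perm.apply_inv_self, M.lm2_fix o h1 hh1]
  refine ⟨h1 * v * g1, ⟨v o, ⟨hvo, hxι⟩, μo, μι, v, hv, rfl, g1, hg1, h1, hh1, rfl⟩,
    h1, hh1, g1, hg1, by group, ?_, ?_⟩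
  · intro hr
    have := ker_of_U0 h0 hh1 hr (v o)
    rw [hh1x] at this
    exact hxι (rsymm this)
  · rw [hg1ι]
    intro hr
    have := (M.preserves ι v hv _ _).mp hr
    rw [Perm.apply_inv_self, hvι] at this
    exact h0 this

def Cell1 (M : LocalMoufangSet X) (o ι : X) (H : Subgroup (Perm X)) (g : Perm X) : Prop :=
  ∃ a ∈ M.U o, ∃ h ∈ H, ∃ b ∈ M.U ι, g = b * h * a

def Cell2 (M : LocalMoufangSet X) (o ι : X) (τ : Perm X) (H : Subgroup (Perm X))
    (g : Perm X) : Prop :=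
  ∃ a ∈ M.U o, ∃ h ∈ H, ∃ c ∈ M.U o, (∀ z : X, M.r (c z) z) ∧ g = c * τ * h * a

def InT (M : LocalMoufangSet X) (o ι : X) (τ : Perm X) (H : Subgroup (Perm X))
    (g : Perm X) : Prop :=
  Cell1 M o ι H g ∨ Cell2 M o ι τ H g

lemma right_stab
    (hH : H = Subgroup.closure {g : Perm X |
      ∃ x y : X, ∃ μx μy : Perm X, M.IsUnitPt o ι x ∧ M.IsUnitPt o ι y ∧
        M.IsMuMap o ι x μx ∧ M.IsMuMap o ι y μy ∧ g = μy * μx})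
    {g h' a' : Perm X} (hg : InT M o ι τ H g) (hh' : h' ∈ H) (ha' : a' ∈ M.U o) :
    InT M o ι τ H (g * h' * a') := by
  obtain ⟨a, ha, h, hh, b, hb, rfl⟩ | ⟨a, ha, h, hh, c, hc, hck, rfl⟩ := hg
  · exact Or.inl ⟨(h'⁻¹ * a * h') * a', mul_mem (H_conj_U0 hH hh' ha) ha',
      h * h', mul_mem hh hh', b, hb, by group⟩
  · exact Or.inr ⟨(h'⁻¹ * a * h') * a', mul_mem (H_conj_U0 hH hh' ha) ha',
      h * h', mul_mem hh hh', c, hc, hck, by group⟩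

lemma La (h0 : ¬ M.r o ι)
    (hH : H = Subgroup.closure {g : Perm X |
      ∃ x y : X, ∃ μx μy : Perm X, M.IsUnitPt o ι x ∧ M.IsUnitPt o ι y ∧
        M.IsMuMap o ι x μx ∧ M.IsMuMap o ι y μy ∧ g = μy * μx})
    {u σ : Perm X} (hu : u ∈ M.U o) (hσ : IsMu M o ι σ) (hnk : ¬ M.r (u ι) ι) :
    Cell1 M o ι H (u * σ) := by
  have hσG := mu_mem_G hσ
  have hσo := mu_o hσ
  have hσι := mu_i hσ
  have hσinvo : σ⁻¹ o = ι := by rw [← hσι, Perm.inv_apply_self]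
  have hvU : σ⁻¹ * u * σ ∈ M.U ι := by
    have := conj_mem (M := M) (inv_mem hσG) hu
    rwa [inv_inv, hσinvo] at this
  have hval : (σ⁻¹ * u * σ) o = σ⁻¹ (u ι) := by
    simp [Perm.mul_apply, hσo]
  have hvo : ¬ M.r ((σ⁻¹ * u * σ) o) o := by
    rw [hval]
    intro hr
    have h2 := (G_pres hσG _ _).mp hr
    rw [Perm.apply_inv_self, hσo] at h2
    exact hnk h2
  obtain ⟨μ, hμ, h1, hh1, g1, hg1, hdec, -, -⟩ := decomp_nonker h0 hvU hvo
  have hb1 : σ * h1⁻¹ * σ⁻¹ ∈ M.U ι := by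
    have := conj_mem (M := M) hσG (inv_mem hh1)
    rwa [hσo] at this
  refine ⟨g1⁻¹, inv_mem hg1, σ * μ, mumul_mem_H hH hσ hμ, σ * h1⁻¹ * σ⁻¹, hb1, ?_⟩
  have huσ : u * σ = σ * (σ⁻¹ * u * σ) := by group
  rw [huσ, hdec]
  group

lemma Lb (h0 : ¬ M.r o ι)
    (hH : H = Subgroup.closure {g : Perm X |
      ∃ x y : X, ∃ μx μy : Perm X, M.IsUnitPt o ι x ∧ M.IsUnitPt o ι y ∧
        M.IsMuMap o ι x μx ∧ M.IsMuMap o ι y μy ∧ g = μy * μx})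
    (hτ' : IsMu M o ι τ) {u σ : Perm X} (hu : u ∈ M.U o) (hσ : IsMu M o ι σ)
    (hk : M.r (u ι) ι) : Cell2 M o ι τ H (u * σ) :=
  ⟨1, one_mem _, τ⁻¹ * σ, mumul_mem_H hH (mu_inv h0 hτ') hσ, u, hu,
    ker_of_U0 h0 hu hk, by group⟩

lemma lemL (h0 : ¬ M.r o ι)
    (hH : H = Subgroup.closure {g : Perm X |
      ∃ x y : X, ∃ μx μy : Perm X, M.IsUnitPt o ι x ∧ M.IsUnitPt o ι y ∧
        M.IsMuMap o ι x μx ∧ M.IsMuMap o ι y μy ∧ g = μy * μx})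
    (hτ' : IsMu M o ι τ) {u σ : Perm X} (hu : u ∈ M.U o) (hσ : IsMu M o ι σ) :
    InT M o ι τ H (u * σ) := by
  by_cases hk : M.r (u ι) ι
  · exact Or.inr (Lb h0 hH hτ' hu hσ hk)
  · exact Or.inl (La h0 hH hu hσ hk)

lemma lemM1 (h0 : ¬ M.r o ι)
    (hH : H = Subgroup.closure {g : Perm X |
      ∃ x y : X, ∃ μx μy : Perm X, M.IsUnitPt o ι x ∧ M.IsUnitPt o ι y ∧
        M.IsMuMap o ι x μx ∧ M.IsMuMap o ι y μy ∧ g = μy * μx})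
    (hτ' : IsMu M o ι τ) {u b : Perm X} (hu : u ∈ M.U o) (hb : b ∈ M.U ι)
    (hbnk : ¬ M.r (b o) o) : InT M o ι τ H (u * b) := by
  obtain ⟨μ, hμ, hA, hhA, gA, hgA, hdec, -, -⟩ := decomp_nonker h0 hb hbnk
  have h1 := lemL h0 hH hτ' (mul_mem hu (inv_mem hhA)) hτ'
  have h2 := right_stab hH h1 (mumul_mem_H hH (mu_inv h0 hτ') hμ) (inv_mem hgA)
  have e : u * b = u * hA⁻¹ * τ * (τ⁻¹ * μ) * gA⁻¹ := by rw [hdec]; group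
  rw [e]
  exact h2

lemma lemM2 (h0 : ¬ M.r o ι)
    (hH : H = Subgroup.closure {g : Perm X |
      ∃ x y : X, ∃ μx μy : Perm X, M.IsUnitPt o ι x ∧ M.IsUnitPt o ι y ∧
        M.IsMuMap o ι x μx ∧ M.IsMuMap o ι y μy ∧ g = μy * μx})
    (hτ' : IsMu M o ι τ) {u b : Perm X} (hu : u ∈ M.U o) (hnk : ¬ M.r (u ι) ι)
    (hb : b ∈ M.U ι) (hbk : ∀ z, M.r (b z) z) : Cell1 M o ι H (u * b) := by
  have huG := memG hu
  have hbG := memG hb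
  have hd : u * b * u⁻¹ ∈ M.U (u ι) := conj_mem huG hb
  have hdk : ∀ z, M.r ((u * b * u⁻¹) z) z := ker_conj huG hbk
  have hpo : ¬ M.r (u ι) o := by
    intro hr
    have h1 := G_pres huG ι o
    rw [M.lm2_fix o u hu] at h1
    exact h0 (rsymm (h1.mpr hr))
  obtain ⟨β, hβ, hβo⟩ := exUi h0 hnk
  have hu5U : β⁻¹ * (u * b * u⁻¹) * β ∈ M.U o := by
    have h1 := conj_mem (M := M) (inv_mem (memG hβ)) hd
    rw [inv_inv] at h1
    rwa [← hβo, Perm.inv_apply_self] at h1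
  have hu5k : ∀ z, M.r ((β⁻¹ * (u * b * u⁻¹) * β) z) z := by
    have h1 := ker_conj (M := M) (inv_mem (memG hβ)) hdk
    rwa [inv_inv] at h1
  have hβnk : ¬ M.r (β⁻¹ o) o := by
    intro hr
    have h1 := (G_pres (memG hβ) _ _).mp hr
    rw [Perm.apply_inv_self, hβo] at h1
    exact hpo (rsymm h1)
  obtain ⟨μ6, hμ6, h6, hh6, g6, hg6, hdec6, hh6nk, -⟩ := decomp_nonker h0 (inv_mem hβ) hβnk
  have hu7U : (β⁻¹ * (u * b * u⁻¹) * β) * h6⁻¹ ∈ M.U o := mul_mem hu5U (inv_mem hh6)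
  have hu7nk : ¬ M.r (((β⁻¹ * (u * b * u⁻¹) * β) * h6⁻¹) ι) ι := by
    intro hr
    have hu7k := ker_of_U0 h0 hu7U hr
    have e1 : h6⁻¹ = (β⁻¹ * (u * b * u⁻¹) * β)⁻¹ * ((β⁻¹ * (u * b * u⁻¹) * β) * h6⁻¹) := by
      group
    have h6k : ∀ z, M.r (h6⁻¹ z) z := by
      rw [e1]
      exact ker_mul (ker_inv hu5k) hu7k
    have h2 := (G_pres (memG hh6) _ _).mp (h6k ι)
    rw [Perm.apply_inv_self] at h2
    exact hh6nk (rsymm h2)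
  obtain ⟨a10, ha10, h10, hh10, b10, hb10, he10⟩ := La h0 hH hu7U hτ' hu7nk
  have hh9 : τ⁻¹ * μ6 ∈ H := mumul_mem_H hH (mu_inv h0 hτ') hμ6
  refine ⟨((τ⁻¹ * μ6)⁻¹ * a10 * (τ⁻¹ * μ6)) * (g6⁻¹ * u),
    mul_mem (H_conj_U0 hH hh9 ha10) (mul_mem (inv_mem hg6) hu),
    h10 * (τ⁻¹ * μ6), mul_mem hh10 hh9, β * b10, mul_mem hβ hb10, ?_⟩
  symm
  calc (β * b10) * (h10 * (τ⁻¹ * μ6)) * (((τ⁻¹ * μ6)⁻¹ * a10 * (τ⁻¹ * μ6)) * (g6⁻¹ * u))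
      = β * ((b10 * h10 * a10) * (τ⁻¹ * (μ6 * (g6⁻¹ * u)))) := by group
    _ = β * ((((β⁻¹ * (u * b * u⁻¹) * β) * h6⁻¹) * τ) * (τ⁻¹ * (μ6 * (g6⁻¹ * u)))) := by
        rw [← he10]
    _ = (β * (β⁻¹ * (u * b * u⁻¹) * β)) * ((h6⁻¹ * μ6 * g6⁻¹) * u) := by group
    _ = (β * (β⁻¹ * (u * b * u⁻¹) * β)) * (β⁻¹ * u) := by rw [← hdec6]
    _ = u * b := by group

lemma lemM3 (h0 : ¬ M.r o ι)
    (hH : H = Subgroup.closure {g : Perm X |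
      ∃ x y : X, ∃ μx μy : Perm X, M.IsUnitPt o ι x ∧ M.IsUnitPt o ι y ∧
        M.IsMuMap o ι x μx ∧ M.IsMuMap o ι y μy ∧ g = μy * μx})
    (hτ' : IsMu M o ι τ) {e : X} (he : M.IsUnitPt o ι e)
    {u b : Perm X} (hu : u ∈ M.U o) (huk : ∀ z, M.r (u z) z)
    (hb : b ∈ M.U ι) (hbk : ∀ z, M.r (b z) z) : InT M o ι τ H (u * b) := by
  obtain ⟨β, hβ, hβo⟩ := exUi h0 he.2
  have hb1U : b * β ∈ M.U ι := mul_mem hb hβ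
  have hb1nk : ¬ M.r ((b * β) o) o := by
    rw [Perm.mul_apply, hβo]
    intro hr
    exact he.1 (rtrans (rsymm (hbk e)) hr)
  obtain ⟨μA, hμA, hA, hhA, gA, hgA, hdecA, hhAnk, -⟩ := decomp_nonker h0 hb1U hb1nk
  have hβnk : ¬ M.r (β⁻¹ o) o := by
    intro hr
    have h1 := (G_pres (memG hβ) _ _).mp hr
    rw [Perm.apply_inv_self, hβo] at h1
    exact he.1 (rsymm h1)
  obtain ⟨μB, hμB, hB, hhB, gB, hgB, hdecB, -, -⟩ := decomp_nonker h0 (inv_mem hβ) hβnk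
  have huAU : u * hA⁻¹ ∈ M.U o := mul_mem hu (inv_mem hhA)
  have huAnk : ¬ M.r ((u * hA⁻¹) ι) ι := by
    intro hr
    have huAk := ker_of_U0 h0 huAU hr
    have e1 : hA⁻¹ = u⁻¹ * (u * hA⁻¹) := by group
    have hAk : ∀ z, M.r (hA⁻¹ z) z := by
      rw [e1]
      exact ker_mul (ker_inv huk) huAk
    have h2 := (G_pres (memG hhA) _ _).mp (hAk ι)
    rw [Perm.apply_inv_self] at h2
    exact hhAnk (rsymm h2)
  have hvDU : μA * (gA⁻¹ * hB⁻¹) * μA⁻¹ ∈ M.U ι := by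
    have h1 := conj_mem (M := M) (mu_mem_G hμA) (mul_mem (inv_mem hgA) (inv_mem hhB))
    rwa [mu_o hμA] at h1
  have hhE : μA * μB ∈ H := mumul_mem_H hH hμA hμB
  have hAD : InT M o ι τ H ((u * hA⁻¹) * (μA * (gA⁻¹ * hB⁻¹) * μA⁻¹)) := by
    by_cases hvDo : M.r ((μA * (gA⁻¹ * hB⁻¹) * μA⁻¹) o) o
    · exact Or.inl (lemM2 h0 hH hτ' huAU huAnk hvDU (ker_of_Ui h0 hvDU hvDo))
    · exact lemM1 h0 hH hτ' huAU hvDU hvDo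
  have h2 := right_stab hH hAD hhE (inv_mem hgB)
  have e2 : ((u * hA⁻¹) * (μA * (gA⁻¹ * hB⁻¹) * μA⁻¹)) * (μA * μB) * gB⁻¹ = u * b := by
    have e1 : ((u * hA⁻¹) * (μA * (gA⁻¹ * hB⁻¹) * μA⁻¹)) * (μA * μB) * gB⁻¹
        = u * ((hA⁻¹ * μA * gA⁻¹) * (hB⁻¹ * μB * gB⁻¹)) := by group
    rw [e1, ← hdecA, ← hdecB]
    group
  rw [← e2]
  exact h2

lemma u_b (h0 : ¬ M.r o ι)
    (hH : H = Subgroup.closure {g : Perm X |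
      ∃ x y : X, ∃ μx μy : Perm X, M.IsUnitPt o ι x ∧ M.IsUnitPt o ι y ∧
        M.IsMuMap o ι x μx ∧ M.IsMuMap o ι y μy ∧ g = μy * μx})
    (hτ' : IsMu M o ι τ) {e : X} (he : M.IsUnitPt o ι e)
    {u b : Perm X} (hu : u ∈ M.U o) (hb : b ∈ M.U ι) : InT M o ι τ H (u * b) := by
  by_cases hbo : M.r (b o) o
  · have hbk := ker_of_Ui h0 hb hbo
    by_cases hnk : M.r (u ι) ι
    · exact lemM3 h0 hH hτ' he hu (ker_of_U0 h0 hu hnk) hb hbk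
    · exact Or.inl (lemM2 h0 hH hτ' hu hnk hb hbk)
  · exact lemM1 h0 hH hτ' hu hb hbo

lemma u_InT (h0 : ¬ M.r o ι)
    (hH : H = Subgroup.closure {g : Perm X |
      ∃ x y : X, ∃ μx μy : Perm X, M.IsUnitPt o ι x ∧ M.IsUnitPt o ι y ∧
        M.IsMuMap o ι x μx ∧ M.IsMuMap o ι y μy ∧ g = μy * μx})
    (hτ' : IsMu M o ι τ) {e : X} (he : M.IsUnitPt o ι e)
    {u g : Perm X} (hu : u ∈ M.U o) (hg : InT M o ι τ H g) : InT M o ι τ H (u * g) := by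
  obtain ⟨a, ha, h, hh, b, hb, rfl⟩ | ⟨a, ha, h, hh, c, hc, hck, rfl⟩ := hg
  · have h1 := u_b h0 hH hτ' he hu hb
    have h2 := right_stab hH h1 hh ha
    have e : u * (b * h * a) = u * b * h * a := by group
    rw [e]; exact h2
  · have h1 := lemL h0 hH hτ' (mul_mem hu hc) hτ'
    have h2 := right_stab hH h1 hh ha
    have e : u * (c * τ * h * a) = u * c * τ * h * a := by group
    rw [e]; exact h2

lemma mu_InT (h0 : ¬ M.r o ι)
    (hH : H = Subgroup.closure {g : Perm X |
      ∃ x y : X, ∃ μx μy : Perm X, M.IsUnitPt o ι x ∧ M.IsUnitPt o ι y ∧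
        M.IsMuMap o ι x μx ∧ M.IsMuMap o ι y μy ∧ g = μy * μx})
    (hτ' : IsMu M o ι τ) {σ g : Perm X} (hσ : IsMu M o ι σ)
    (hg : InT M o ι τ H g) : InT M o ι τ H (σ * g) := by
  have hσG := mu_mem_G hσ
  obtain ⟨a, ha, h, hh, b, hb, rfl⟩ | ⟨a, ha, h, hh, c, hc, hck, rfl⟩ := hg
  · have hu1 : σ * b * σ⁻¹ ∈ M.U o := by
      have h1 := conj_mem (M := M) hσG hb
      rwa [mu_i hσ] at h1
    have h1 := lemL h0 hH hτ' hu1 hτ'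
    have h2 := right_stab hH h1 (mul_mem (mumul_mem_H hH (mu_inv h0 hτ') hσ) hh) ha
    have e : σ * (b * h * a) = (σ * b * σ⁻¹) * τ * ((τ⁻¹ * σ) * h) * a := by group
    rw [e]; exact h2
  · have hb2 : σ * c * σ⁻¹ ∈ M.U ι := by
      have h1 := conj_mem (M := M) hσG hc
      rwa [mu_o hσ] at h1
    refine Or.inl ⟨a, ha, (σ * τ) * h, mul_mem (mumul_mem_H hH hσ hτ') hh,
      σ * c * σ⁻¹, hb2, by group⟩

lemma G_decomp (h0 : ¬ M.r o ι)
    (hH : H = Subgroup.closure {g : Perm X |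
      ∃ x y : X, ∃ μx μy : Perm X, M.IsUnitPt o ι x ∧ M.IsUnitPt o ι y ∧
        M.IsMuMap o ι x μx ∧ M.IsMuMap o ι y μy ∧ g = μy * μx})
    (hτ' : IsMu M o ι τ) {e : X} (he : M.IsUnitPt o ι e)
    {g : Perm X} (hg : g ∈ M.G) : InT M o ι τ H g := by
  let K : Subgroup (Perm X) :=
  { carrier := {g : Perm X | (∀ t, InT M o ι τ H t → InT M o ι τ H (g * t)) ∧
      (∀ t, InT M o ι τ H t → InT M o ι τ H (g⁻¹ * t))}
    one_mem' := ⟨fun t ht => by simpa using ht, fun t ht => by simpa using ht⟩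
    mul_mem' := by
      rintro f g ⟨hf1, hf2⟩ ⟨hg1, hg2⟩
      constructor
      · intro t ht
        have h1 := hf1 _ (hg1 t ht)
        rwa [← mul_assoc] at h1
      · intro t ht
        have h1 := hg2 _ (hf2 t ht)
        rw [mul_inv_rev]
        rwa [← mul_assoc] at h1
    inv_mem' := by
      rintro f ⟨hf1, hf2⟩
      exact ⟨hf2, fun t ht => by simpa using hf1 t ht⟩ }
  have hU0K : ∀ u ∈ M.U o, u ∈ K := fun u hu =>
    ⟨fun t ht => u_InT h0 hH hτ' he hu ht, fun t ht => u_InT h0 hH hτ' he (inv_mem hu) ht⟩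
  have hMuK : ∀ σ, IsMu M o ι σ → σ ∈ K := fun σ hσ =>
    ⟨fun t ht => mu_InT h0 hH hτ' hσ ht, fun t ht => mu_InT h0 hH hτ' (mu_inv h0 hσ) ht⟩
  have hUiKnk : ∀ b ∈ M.U ι, ¬ M.r (b o) o → b ∈ K := by
    intro b hb hbo
    obtain ⟨μ, hμ, h1, hh1, g1, hg1, hdec, -, -⟩ := decomp_nonker h0 hb hbo
    rw [hdec]
    exact mul_mem (mul_mem (K.inv_mem (hU0K _ hh1)) (hMuK _ hμ)) (K.inv_mem (hU0K _ hg1))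
  have hUiK : ∀ b ∈ M.U ι, b ∈ K := by
    intro b hb
    by_cases hbo : M.r (b o) o
    · have hbk := ker_of_Ui h0 hb hbo
      obtain ⟨β, hβ, hβo⟩ := exUi h0 he.2
      have hb1nk : ¬ M.r ((b * β) o) o := by
        rw [Perm.mul_apply, hβo]
        intro hr
        exact he.1 (rtrans (rsymm (hbk e)) hr)
      have hβnk : ¬ M.r (β⁻¹ o) o := by
        intro hr
        have h1 := (G_pres (memG hβ) _ _).mp hr
        rw [Perm.apply_inv_self, hβo] at h1
        exact he.1 (rsymm h1)
      have e1 : b = (b * β) * β⁻¹ := by group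
      rw [e1]
      exact mul_mem (hUiKnk _ (mul_mem hb hβ) hb1nk) (hUiKnk _ (inv_mem hβ) hβnk)
    · exact hUiKnk b hb hbo
  have hGK : M.G ≤ K := by
    refine iSup_le fun x => ?_
    intro u hu
    by_cases hxo : M.r x o
    · have hxι : ¬ M.r x ι := fun hr => h0 (rtrans (rsymm hxo) hr)
      obtain ⟨w, hw, hwo⟩ := exUi h0 hxι
      have hc : w⁻¹ * u * w ∈ M.U o := by
        have h1 := conj_mem (M := M) (inv_mem (memG hw)) hu
        rw [inv_inv] at h1
        rwa [← hwo, Perm.inv_apply_self] at h1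
      have e1 : w * (w⁻¹ * u * w) * w⁻¹ = u := by group
      exact e1 ▸ mul_mem (mul_mem (hUiK w hw) (hU0K _ hc)) (K.inv_mem (hUiK w hw))
    · obtain ⟨w, hw, hwι⟩ := exU0 h0 hxo
      have hc : w⁻¹ * u * w ∈ M.U ι := by
        have h1 := conj_mem (M := M) (inv_mem (memG hw)) hu
        rw [inv_inv] at h1
        rwa [← hwι, Perm.inv_apply_self] at h1
      have e1 : w * (w⁻¹ * u * w) * w⁻¹ = u := by group
      exact e1 ▸ mul_mem (mul_mem (hU0K w hw) (hUiK _ hc)) (K.inv_mem (hU0K w hw))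
  have hone : InT M o ι τ H 1 := Or.inl ⟨1, one_mem _, 1, one_mem _, 1, one_mem _, by group⟩
  have hg1 : ∀ t, InT M o ι τ H t → InT M o ι τ H (g * t) := (hGK hg).1
  have := hg1 1 hone
  simpa using this

end LMS10

/-- the Hua subgroup `H = ⟨μ_x μ_y : x, y units⟩` equals the
two-point stabilizer `G_{0,∞}`; `G_0 = U_0 H`; and `G = U_0 H U_∞ ∪ U_0 H τ U_0°`.
Left-action convention as before (right products reverse). -/
theorem stmt10 {X : Type*} (M : LocalMoufangSet X) (o ι : X) (h0 : ¬ M.r o ι)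
    (e : X) (he : M.IsUnitPt o ι e)
    (τ : Equiv.Perm X) (hτ : M.IsMuMap o ι e τ)
    (H : Subgroup (Equiv.Perm X))
    (hH : H = Subgroup.closure {g : Equiv.Perm X |
      ∃ x y : X, ∃ μx μy : Equiv.Perm X, M.IsUnitPt o ι x ∧ M.IsUnitPt o ι y ∧
        M.IsMuMap o ι x μx ∧ M.IsMuMap o ι y μy ∧ g = μy * μx}) :
    (∀ g : Equiv.Perm X, g ∈ H ↔ (g ∈ M.G ∧ g o = o ∧ g ι = ι)) ∧
    (∀ g : Equiv.Perm X, (g ∈ M.G ∧ g o = o) ↔ ∃ h ∈ H, ∃ a ∈ M.U o, g = h * a) ∧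
    (∀ g ∈ M.G,
      (∃ a ∈ M.U o, ∃ h ∈ H, ∃ b ∈ M.U ι, g = b * h * a) ∨
      (∃ a ∈ M.U o, ∃ h ∈ H, ∃ c ∈ M.U o, (∀ z : X, M.r (c z) z) ∧
        g = c * τ * h * a)) := by
  have hτ' : LMS10.IsMu M o ι τ := ⟨e, he, hτ⟩
  have hdecomp : ∀ g ∈ M.G, LMS10.InT M o ι τ H g := fun g hg =>
    LMS10.G_decomp h0 hH hτ' he hg
  have part2 : ∀ g : Equiv.Perm X, (g ∈ M.G ∧ g o = o) ↔ ∃ h ∈ H, ∃ a ∈ M.U o, g = h * a := by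
    intro g
    constructor
    · rintro ⟨hg, hgo⟩
      obtain ⟨a, ha, h, hh, b, hb, rfl⟩ | ⟨a, ha, h, hh, c, hc, hck, rfl⟩ := hdecomp g hg
      · have hho := (LMS10.H_mem_spec hH hh).2.1
        have hval : (b * h * a) o = b o := by
          rw [Equiv.Perm.mul_apply, M.lm2_fix o a ha, Equiv.Perm.mul_apply, hho]
        rw [hval] at hgo
        have hb1 : b = 1 := LMS10.eq_one_Ui h0 hb hgo
        exact ⟨h, hh, a, ha, by rw [hb1]; group⟩
      · exfalso
        have hval : (c * τ * h * a) o = c ι := by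
          rw [Equiv.Perm.mul_apply, M.lm2_fix o a ha, Equiv.Perm.mul_apply,
            (LMS10.H_mem_spec hH hh).2.1, Equiv.Perm.mul_apply, hτ.1]
        rw [hval] at hgo
        have h1 := hck ι
        rw [hgo] at h1
        exact h0 h1
    · rintro ⟨h, hh, a, ha, rfl⟩
      have hspec := LMS10.H_mem_spec hH hh
      exact ⟨mul_mem hspec.1 (LMS10.memG ha),
        by rw [Equiv.Perm.mul_apply, M.lm2_fix o a ha, hspec.2.1]⟩
  refine ⟨?_, part2, fun g hg => hdecomp g hg⟩
  intro g
  constructor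
  · intro hg
    exact LMS10.H_mem_spec hH hg
  · rintro ⟨hgG, hgo, hgι⟩
    obtain ⟨h, hh, a, ha, rfl⟩ := (part2 _).mp ⟨hgG, hgo⟩
    have hhι := (LMS10.H_mem_spec hH hh).2.2
    rw [Equiv.Perm.mul_apply] at hgι
    have haι : a ι = ι := h.injective (hgι.trans hhι.symm)
    have ha1 : a = 1 := LMS10.eq_one_U0 h0 ha haι
    rw [ha1]
    simpa using hh
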